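/- Two uniform block permutations d₁, d₂ ∈ U_k generate the same left ideal (U_k d₁ = U_k d₂) if and only if bot(d₁) = bot(d₂). Consequently, the L-classes of U_k are in bijection with set partitions of [k], and each L-class contains exactly one idempotent. -/

import Mathlib

open Sum

/-- A set partition `d` of `[k] ∪ [k̄]` (encoded as a setoid on `Fin k ⊕ Fin k`,
top row = `inl`, bottom row = `inr`) is *uniform* if every block contains as many
top-row elements as bottom-row elements. -/
def IsUniform (k : ℕ) (d : Setoid (Fin k ⊕ Fin k)) : Prop :=
  ∀ x : Fin k ⊕ Fin k,
    {a : Fin k | d.r (.inl a) x}.ncard = {b : Fin k | d.r (.inr b) x}.ncard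

/-- Embedding of a two-row diagram into the top two rows of a three-row diagram. -/
def row12 (k : ℕ) : Fin k ⊕ Fin k → Fin k ⊕ (Fin k ⊕ Fin k) :=
  Sum.elim (fun a => .inl a) (fun b => .inr (.inl b))

/-- Embedding of a two-row diagram into the bottom two rows of a three-row diagram. -/
def row23 (k : ℕ) : Fin k ⊕ Fin k → Fin k ⊕ (Fin k ⊕ Fin k) :=
  Sum.elim (fun a => .inr (.inl a)) (fun b => .inr (.inr b))

/-- Embedding of a two-row diagram into the outer two rows of a three-row diagram. -/
def row13 (k : ℕ) : Fin k ⊕ Fin k → Fin k ⊕ (Fin k ⊕ Fin k) :=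
  Sum.elim (fun a => .inl a) (fun b => .inr (.inr b))

/-- The equivalence relation on the three-row vertex set generated by transporting
`d` along the embedding `f`. -/
def liftSetoid (k : ℕ) (f : Fin k ⊕ Fin k → Fin k ⊕ (Fin k ⊕ Fin k))
    (d : Setoid (Fin k ⊕ Fin k)) : Setoid (Fin k ⊕ (Fin k ⊕ Fin k)) :=
  Relation.EqvGen.setoid (fun x y => ∃ a b, d.r a b ∧ x = f a ∧ y = f b)

/-- The diagram product: stack `d` on top of `d'`, take connected components of the
three-row diagram, and restrict to the outer rows. -/
def ubpMul {k : ℕ} (d d' : Setoid (Fin k ⊕ Fin k)) : Setoid (Fin k ⊕ Fin k) :=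
  Setoid.comap (row13 k) (liftSetoid k (row12 k) d ⊔ liftSetoid k (row23 k) d')

/-- The identity diagram `{{1,1̄},…,{k,k̄}}`. -/
def ubpOne (k : ℕ) : Setoid (Fin k ⊕ Fin k) := Setoid.ker (Sum.elim id id)

/-- The set partition of `[k]` induced on the top row. -/
def topPart {k : ℕ} (d : Setoid (Fin k ⊕ Fin k)) : Setoid (Fin k) :=
  Setoid.comap Sum.inl d

/-- The set partition of `[k]` induced on the bottom row. -/
def botPart {k : ℕ} (d : Setoid (Fin k ⊕ Fin k)) : Setoid (Fin k) :=
  Setoid.comap Sum.inr d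

/-- The idempotent diagram `e_π = {A ∪ Ā : A ∈ π}` associated to a set partition `π` of `[k]`. -/
def ePart {k : ℕ} (π : Setoid (Fin k)) : Setoid (Fin k ⊕ Fin k) :=
  Setoid.comap (Sum.elim id id) π

/-- The diagram `{{i, σ(i)‾} : i ∈ [k]}` of a permutation `σ ∈ S_k`. -/
def permToUBP {k : ℕ} (σ : Equiv.Perm (Fin k)) : Setoid (Fin k ⊕ Fin k) :=
  Setoid.ker (Sum.elim (fun i => σ i) id)

/-- The reflection `d̃` of a diagram across a horizontal line (swap barred/unbarred). -/
def reflectUBP {k : ℕ} (d : Setoid (Fin k ⊕ Fin k)) : Setoid (Fin k ⊕ Fin k) :=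
  Setoid.comap Sum.swap d

/-- The image of a set `C ⊆ [k]` of top-row elements under the block bijection of `d`:
the set of bottom-row elements connected to some element of `C`. -/
def blockMap {k : ℕ} (d : Setoid (Fin k ⊕ Fin k)) (C : Set (Fin k)) : Set (Fin k) :=
  {j | ∃ i ∈ C, d.r (.inl i) (.inr j)}

/-- The principal left ideal `U_k d` generated by `d`. -/
def leftIdeal (k : ℕ) (d : Setoid (Fin k ⊕ Fin k)) : Set (Setoid (Fin k ⊕ Fin k)) :=
  {x | ∃ a, IsUniform k a ∧ x = ubpMul a d}

namespace UBPaux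
variable {k : ℕ}

lemma fiber_count {n : ℕ} {Q : Type*} (qA qB : Fin n → Q) (A B : Set (Fin n))
    (hA : ∀ i i', qA i = qA i' → (i ∈ A ↔ i' ∈ A))
    (hB : ∀ j j', qB j = qB j' → (j ∈ B ↔ j' ∈ B))
    (himg : ∀ q, (∃ i ∈ A, qA i = q) ↔ (∃ j ∈ B, qB j = q))
    (hcard : ∀ q, {i | qA i = q}.ncard = {j | qB j = q}.ncard) :
    A.ncard = B.ncard := by
  classical
  have hAf : A.ncard = A.toFinset.card := Set.ncard_eq_toFinset_card' A
  have hBf : B.ncard = B.toFinset.card := Set.ncard_eq_toFinset_card' B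
  set t : Finset Q := A.toFinset.image qA ∪ B.toFinset.image qB with ht
  have h1 : A.toFinset.card = ∑ q ∈ t, (A.toFinset.filter fun i => qA i = q).card :=
    Finset.card_eq_sum_card_fiberwise (fun i hi => by
      rw [ht, Finset.mem_coe, Finset.mem_union]
      exact Or.inl (Finset.mem_image.mpr ⟨i, hi, rfl⟩))
  have h2 : B.toFinset.card = ∑ q ∈ t, (B.toFinset.filter fun j => qB j = q).card :=
    Finset.card_eq_sum_card_fiberwise (fun j hj => by
      rw [ht, Finset.mem_coe, Finset.mem_union]
      exact Or.inr (Finset.mem_image.mpr ⟨j, hj, rfl⟩))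
  rw [hAf, hBf, h1, h2]
  apply Finset.sum_congr rfl
  intro q _
  by_cases hq : ∃ i ∈ A, qA i = q
  · obtain ⟨i0, hi0, hqi0⟩ := hq
    obtain ⟨j0, hj0, hqj0⟩ := (himg q).mp ⟨i0, hi0, hqi0⟩
    have eA : A.toFinset.filter (fun i => qA i = q) = Finset.univ.filter (fun i => qA i = q) := by
      apply Finset.ext; intro i
      simp only [Finset.mem_filter, Set.mem_toFinset, Finset.mem_univ, true_and]
      exact ⟨fun h => h.2, fun h => ⟨(hA i0 i (hqi0.trans h.symm)).mp hi0, h⟩⟩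
    have eB : B.toFinset.filter (fun j => qB j = q) = Finset.univ.filter (fun j => qB j = q) := by
      apply Finset.ext; intro j
      simp only [Finset.mem_filter, Set.mem_toFinset, Finset.mem_univ, true_and]
      exact ⟨fun h => h.2, fun h => ⟨(hB j0 j (hqj0.trans h.symm)).mp hj0, h⟩⟩
    rw [eA, eB]
    have hc := hcard q
    rw [Set.ncard_eq_toFinset_card' {i | qA i = q},
      Set.ncard_eq_toFinset_card' {j | qB j = q}] at hc
    convert hc using 2 <;> · apply Finset.ext; intro x; simp
  · have hq' : ¬ ∃ j ∈ B, qB j = q := fun h => hq ((himg q).mpr h)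
    have eA : A.toFinset.filter (fun i => qA i = q) = ∅ :=
      Finset.filter_eq_empty_iff.mpr (fun {i} hi h => hq ⟨i, Set.mem_toFinset.mp hi, h⟩)
    have eB : B.toFinset.filter (fun j => qB j = q) = ∅ :=
      Finset.filter_eq_empty_iff.mpr (fun {j} hj h => hq' ⟨j, Set.mem_toFinset.mp hj, h⟩)
    rw [eA, eB]

lemma exists_inr_rel {d : Setoid (Fin k ⊕ Fin k)} (hd : IsUniform k d) {u : Fin k ⊕ Fin k}
    {a : Fin k} (h : d.r (inl a) u) : ∃ b, d.r (inr b) u := by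
  have hne : {a' : Fin k | d.r (inl a') u}.Nonempty := ⟨a, h⟩
  have hpos : 0 < {a' : Fin k | d.r (inl a') u}.ncard :=
    (Set.ncard_pos (Set.toFinite _)).mpr hne
  rw [hd u] at hpos
  exact (Set.ncard_pos (Set.toFinite _)).mp hpos

lemma exists_inl_rel {d : Setoid (Fin k ⊕ Fin k)} (hd : IsUniform k d) {u : Fin k ⊕ Fin k}
    {b : Fin k} (h : d.r (inr b) u) : ∃ a, d.r (inl a) u := by
  have hne : {b' : Fin k | d.r (inr b') u}.Nonempty := ⟨b, h⟩
  have hpos : 0 < {b' : Fin k | d.r (inr b') u}.ncard :=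
    (Set.ncard_pos (Set.toFinite _)).mpr hne
  rw [← hd u] at hpos
  exact (Set.ncard_pos (Set.toFinite _)).mp hpos

lemma lift_rel {d : Setoid (Fin k ⊕ Fin k)} (f : Fin k ⊕ Fin k → Fin k ⊕ (Fin k ⊕ Fin k))
    {u v : Fin k ⊕ Fin k} (h : d.r u v) : (liftSetoid k f d) (f u) (f v) :=
  Relation.EqvGen.rel _ _ ⟨u, v, h, rfl, rfl⟩

lemma lift_le {d : Setoid (Fin k ⊕ Fin k)} {f : Fin k ⊕ Fin k → Fin k ⊕ (Fin k ⊕ Fin k)}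
    {S : Setoid (Fin k ⊕ (Fin k ⊕ Fin k))} (h : ∀ u v, d.r u v → S (f u) (f v)) :
    liftSetoid k f d ≤ S :=
  Setoid.eqvGen_le (fun _ _ h' => by obtain ⟨u, v, huv, rfl, rfl⟩ := h'; exact h u v huv)

section Big
variable {a d : Setoid (Fin k ⊕ Fin k)}

lemma big_row12 {u v : Fin k ⊕ Fin k} (h : a.r u v) :
    (liftSetoid k (row12 k) a ⊔ liftSetoid k (row23 k) d) (row12 k u) (row12 k v) :=
  Setoid.le_def.mp le_sup_left (lift_rel (row12 k) h)

lemma big_row23 {u v : Fin k ⊕ Fin k} (h : d.r u v) :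
    (liftSetoid k (row12 k) a ⊔ liftSetoid k (row23 k) d) (row23 k u) (row23 k v) :=
  Setoid.le_def.mp le_sup_right (lift_rel (row23 k) h)

lemma big_le {S : Setoid (Fin k ⊕ (Fin k ⊕ Fin k))}
    (h1 : ∀ u v, a.r u v → S (row12 k u) (row12 k v))
    (h2 : ∀ u v, d.r u v → S (row23 k u) (row23 k v)) :
    (liftSetoid k (row12 k) a ⊔ liftSetoid k (row23 k) d) ≤ S :=
  sup_le (lift_le h1) (lift_le h2)

lemma ubpMul_rel {u v : Fin k ⊕ Fin k} :
    (ubpMul a d).r u v ↔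
      (liftSetoid k (row12 k) a ⊔ liftSetoid k (row23 k) d) (row13 k u) (row13 k v) := Iff.rfl

end Big
end UBPaux
namespace UBPaux
variable {k : ℕ}

lemma botPart_le_mul (a d : Setoid (Fin k ⊕ Fin k)) :
    botPart d ≤ botPart (ubpMul a d) := by
  intro j j' h
  exact (big_row23 (a := a) h :)

lemma mul_uniform {a d : Setoid (Fin k ⊕ Fin k)} (ha : IsUniform k a) (hd : IsUniform k d) :
    IsUniform k (ubpMul a d) := by
  intro x
  set B := liftSetoid k (row12 k) a ⊔ liftSetoid k (row23 k) d with hBdef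
  set z := row13 k x with hz
  show {i : Fin k | B (row13 k (inl i)) z}.ncard = {b : Fin k | B (row13 k (inr b)) z}.ncard
  have step1 : {i : Fin k | B (inl i) z}.ncard = {m : Fin k | B (inr (inl m)) z}.ncard := by
    apply fiber_count (fun i => (Quotient.mk'' (inl i) : Quotient a))
      (fun m => (Quotient.mk'' (inr m) : Quotient a))
    · intro i i' hq
      have h : a.r (inl i) (inl i') := Quotient.exact' hq
      have hb : B (inl i) (inl i') := big_row12 (d := d) h
      exact ⟨fun h' => B.trans' (B.symm' hb) h', fun h' => B.trans' hb h'⟩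
    · intro m m' hq
      have h : a.r (inr m) (inr m') := Quotient.exact' hq
      have hb : B (inr (inl m)) (inr (inl m')) := big_row12 (d := d) h
      exact ⟨fun h' => B.trans' (B.symm' hb) h', fun h' => B.trans' hb h'⟩
    · intro q
      constructor
      · rintro ⟨i, hi, rfl⟩
        obtain ⟨m, hm⟩ := exists_inr_rel ha (a.refl' (inl i))
        refine ⟨m, ?_, Quotient.sound' hm⟩
        exact B.trans' (big_row12 (d := d) hm) hi
      · rintro ⟨m, hm, rfl⟩
        obtain ⟨i, hi⟩ := exists_inl_rel ha (a.refl' (inr m))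
        refine ⟨i, ?_, Quotient.sound' hi⟩
        exact B.trans' (big_row12 (d := d) hi) hm
    · intro q
      induction q using Quotient.inductionOn' with
      | h u =>
        have e1 : {i : Fin k | (Quotient.mk'' (inl i) : Quotient a) = Quotient.mk'' u}
            = {i : Fin k | a.r (inl i) u} := by
          ext i; exact ⟨fun h => Quotient.exact' h, fun h => Quotient.sound' h⟩
        have e2 : {m : Fin k | (Quotient.mk'' (inr m) : Quotient a) = Quotient.mk'' u}
            = {m : Fin k | a.r (inr m) u} := by
          ext m; exact ⟨fun h => Quotient.exact' h, fun h => Quotient.sound' h⟩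
        rw [e1, e2]; exact ha u
  have step2 : {m : Fin k | B (inr (inl m)) z}.ncard = {b : Fin k | B (inr (inr b)) z}.ncard := by
    apply fiber_count (fun m => (Quotient.mk'' (inl m) : Quotient d))
      (fun b => (Quotient.mk'' (inr b) : Quotient d))
    · intro m m' hq
      have h : d.r (inl m) (inl m') := Quotient.exact' hq
      have hb : B (inr (inl m)) (inr (inl m')) := big_row23 (a := a) h
      exact ⟨fun h' => B.trans' (B.symm' hb) h', fun h' => B.trans' hb h'⟩
    · intro b b' hq
      have h : d.r (inr b) (inr b') := Quotient.exact' hq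
      have hb : B (inr (inr b)) (inr (inr b')) := big_row23 (a := a) h
      exact ⟨fun h' => B.trans' (B.symm' hb) h', fun h' => B.trans' hb h'⟩
    · intro q
      constructor
      · rintro ⟨m, hm, rfl⟩
        obtain ⟨b, hb⟩ := exists_inr_rel hd (d.refl' (inl m))
        refine ⟨b, ?_, Quotient.sound' hb⟩
        exact B.trans' (big_row23 (a := a) hb) hm
      · rintro ⟨b, hb, rfl⟩
        obtain ⟨m, hm⟩ := exists_inl_rel hd (d.refl' (inr b))
        refine ⟨m, ?_, Quotient.sound' hm⟩
        exact B.trans' (big_row23 (a := a) hm) hb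
    · intro q
      induction q using Quotient.inductionOn' with
      | h u =>
        have e1 : {m : Fin k | (Quotient.mk'' (inl m) : Quotient d) = Quotient.mk'' u}
            = {m : Fin k | d.r (inl m) u} := by
          ext m; exact ⟨fun h => Quotient.exact' h, fun h => Quotient.sound' h⟩
        have e2 : {b : Fin k | (Quotient.mk'' (inr b) : Quotient d) = Quotient.mk'' u}
            = {b : Fin k | d.r (inr b) u} := by
          ext b; exact ⟨fun h => Quotient.exact' h, fun h => Quotient.sound' h⟩
        rw [e1, e2]; exact hd u
  exact step1.trans step2

end UBPaux
namespace UBPaux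
variable {k : ℕ}

section Factor
variable {x d : Setoid (Fin k ⊕ Fin k)}

lemma factor (hx : IsUniform k x) (hd : IsUniform k d)
    (hbot : botPart d ≤ botPart x) (m : Fin k → Fin k)
    (hm : ∀ j, d.r (inl j) (inr (m j))) :
    ubpMul (Setoid.comap (Sum.elim inl fun j => inr (m j)) x) d = x := by
  set g : Fin k ⊕ Fin k → Fin k ⊕ Fin k := Sum.elim inl (fun j => inr (m j)) with hg
  set a := Setoid.comap g x with hadef
  set B := liftSetoid k (row12 k) a ⊔ liftSetoid k (row23 k) d with hBdef
  apply Setoid.ext; intro u v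
  constructor
  · intro h
    set h3 : Fin k ⊕ (Fin k ⊕ Fin k) → Fin k ⊕ Fin k :=
      Sum.elim inl (Sum.elim (fun j => inr (m j)) inr) with hh3
    have hle : B ≤ Setoid.comap h3 x := by
      apply big_le
      · intro u' v' h'
        cases u' <;> cases v' <;> exact h'
      · intro u' v' h'
        have key : ∀ w, d.r w (Sum.inr (Sum.elim m id w)) := by
          intro w; cases w with
          | inl j => exact hm j
          | inr b => exact d.refl' _
        have hdd : d.r (inr (Sum.elim m id u')) (inr (Sum.elim m id v')) :=
          d.trans' (d.symm' (key u')) (d.trans' h' (key v'))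
        have hxx : x.r (inr (Sum.elim m id u')) (inr (Sum.elim m id v')) := hbot hdd
        cases u' <;> cases v' <;> exact hxx
    have h' : x.r (h3 (row13 k u)) (h3 (row13 k v)) := hle h
    cases u <;> cases v <;> exact h'
  · intro h
    have key : ∀ w, ∃ i : Fin k, B (row13 k w) (inl i) ∧ x.r (inl i) w := by
      intro w; cases w with
      | inl i => exact ⟨i, B.refl' _, x.refl' _⟩
      | inr n =>
        obtain ⟨j, hj⟩ := exists_inl_rel hd (d.refl' (inr n))
        obtain ⟨i, hi⟩ := exists_inl_rel hx (x.refl' (inr (m j)))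
        refine ⟨i, ?_, ?_⟩
        · have h1 : B (row23 k (inl j)) (row23 k (inr n)) := big_row23 hj
          have h2 : B (row12 k (inl i)) (row12 k (inr j)) :=
            big_row12 (show a.r (inl i) (inr j) from hi)
          exact B.trans' (B.symm' h1) (B.symm' h2)
        · have h3 : d.r (inr (m j)) (inr n) := d.trans' (d.symm' (hm j)) hj
          exact x.trans' hi (hbot h3)
    obtain ⟨i, hbu, hxu⟩ := key u
    obtain ⟨i', hbv, hxv⟩ := key v
    have hii : a.r (inl i) (inl i') := x.trans' hxu (x.trans' h (x.symm' hxv))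
    have hbB : B (inl i) (inl i') := big_row12 hii
    exact show B (row13 k u) (row13 k v) from B.trans' hbu (B.trans' hbB (B.symm' hbv))

lemma a_uniform (hx : IsUniform k x) (hd : IsUniform k d)
    (hbot : botPart d ≤ botPart x) (m : Fin k → Fin k)
    (hm : ∀ j, d.r (inl j) (inr (m j))) :
    IsUniform k (Setoid.comap (Sum.elim inl fun j => inr (m j)) x) := by
  intro z
  set g : Fin k ⊕ Fin k → Fin k ⊕ Fin k := Sum.elim inl (fun j => inr (m j)) with hg
  set w := g z with hw
  show {i : Fin k | x.r (g (inl i)) w}.ncard = {j : Fin k | x.r (g (inr j)) w}.ncard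
  have h0 : {i : Fin k | x.r (g (inl i)) w} = {i : Fin k | x.r (inl i) w} := rfl
  have h0' : {j : Fin k | x.r (g (inr j)) w} = {j : Fin k | x.r (inr (m j)) w} := rfl
  rw [h0, h0', hx w]
  apply fiber_count (fun n => (Quotient.mk'' (inr n) : Quotient d))
    (fun j => (Quotient.mk'' (inl j) : Quotient d))
  · intro n n' hq
    have hxx : x.r (inr n) (inr n') := hbot (Quotient.exact' hq : d.r (inr n) (inr n'))
    exact ⟨fun h' => x.trans' (x.symm' hxx) h', fun h' => x.trans' hxx h'⟩
  · intro j j' hq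
    have h1 : d.r (inl j) (inl j') := Quotient.exact' hq
    have h2 : d.r (inr (m j)) (inr (m j')) :=
      d.trans' (d.symm' (hm j)) (d.trans' h1 (hm j'))
    have hxx : x.r (inr (m j)) (inr (m j')) := hbot h2
    exact ⟨fun h' => x.trans' (x.symm' hxx) h', fun h' => x.trans' hxx h'⟩
  · intro q
    constructor
    · rintro ⟨n, hn, rfl⟩
      obtain ⟨j, hj⟩ := exists_inl_rel hd (d.refl' (inr n))
      refine ⟨j, ?_, Quotient.sound' hj⟩
      have h1 : d.r (inr (m j)) (inr n) := d.trans' (d.symm' (hm j)) hj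
      exact x.trans' (hbot h1) hn
    · rintro ⟨j, hj, rfl⟩
      exact ⟨m j, hj, Quotient.sound' (d.symm' (hm j))⟩
  · intro q
    induction q using Quotient.inductionOn' with
    | h u =>
      have e1 : {n : Fin k | (Quotient.mk'' (inr n) : Quotient d) = Quotient.mk'' u}
          = {n : Fin k | d.r (inr n) u} := by
        ext n; exact ⟨fun h => Quotient.exact' h, fun h => Quotient.sound' h⟩
      have e2 : {j : Fin k | (Quotient.mk'' (inl j) : Quotient d) = Quotient.mk'' u}
          = {j : Fin k | d.r (inl j) u} := by
        ext j; exact ⟨fun h => Quotient.exact' h, fun h => Quotient.sound' h⟩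
      rw [e1, e2]; exact (hd u).symm

end Factor
end UBPaux
namespace UBPaux
variable {k : ℕ}

lemma ePart_uniform (π : Setoid (Fin k)) : IsUniform k (ePart π) := fun _ => rfl

lemma botPart_ePart (π : Setoid (Fin k)) : botPart (ePart π) = π :=
  Setoid.ext fun _ _ => Iff.rfl

lemma ePart_idem (π : Setoid (Fin k)) : ubpMul (ePart π) (ePart π) = ePart π := by
  have h := factor (x := ePart π) (d := ePart π) (ePart_uniform π) (ePart_uniform π)
    le_rfl id (fun j => π.refl' j)
  have hco : Setoid.comap (Sum.elim inl fun j => inr (id j)) (ePart π) = ePart π := by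
    apply Setoid.ext; intro u v; cases u <;> cases v <;> exact Iff.rfl
  rwa [hco] at h

lemma charL {d : Setoid (Fin k ⊕ Fin k)} (hd : IsUniform k d) :
    leftIdeal k d = {x | IsUniform k x ∧ botPart d ≤ botPart x} := by
  ext x; constructor
  · rintro ⟨a, ha, rfl⟩
    exact ⟨mul_uniform ha hd, botPart_le_mul a d⟩
  · rintro ⟨hx, hbot⟩
    choose m hm using fun j => exists_inr_rel hd (d.refl' (inl j))
    have hm' : ∀ j, d.r (inl j) (inr (m j)) := fun j => d.symm' (hm j)
    exact ⟨_, a_uniform hx hd hbot m hm', (factor hx hd hbot m hm').symm⟩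

lemma mem_leftIdeal_self {d : Setoid (Fin k ⊕ Fin k)} (hd : IsUniform k d) :
    d ∈ leftIdeal k d := by
  rw [charL hd]; exact ⟨hd, le_rfl⟩

lemma part1 {d₁ d₂ : Setoid (Fin k ⊕ Fin k)} (h₁ : IsUniform k d₁) (h₂ : IsUniform k d₂) :
    leftIdeal k d₁ = leftIdeal k d₂ ↔ botPart d₁ = botPart d₂ := by
  constructor
  · intro h
    have m1 : d₁ ∈ leftIdeal k d₂ := h ▸ mem_leftIdeal_self h₁
    have m2 : d₂ ∈ leftIdeal k d₁ := h ▸ mem_leftIdeal_self h₂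
    rw [charL h₂] at m1; rw [charL h₁] at m2
    exact le_antisymm m2.2 m1.2
  · intro h
    rw [charL h₁, charL h₂, h]

end UBPaux
namespace UBPaux
variable {k : ℕ}

lemma idem_eq_ePart {e : Setoid (Fin k ⊕ Fin k)} (he : IsUniform k e)
    (hee : ubpMul e e = e) : e = ePart (botPart e) := by
  set B := liftSetoid k (row12 k) e ⊔ liftSetoid k (row23 k) e with hB
  have hprod : ∀ u v : Fin k ⊕ Fin k, B (row13 k u) (row13 k v) → e.r u v := by
    intro u v h
    have h' : (ubpMul e e).r u v := h
    rwa [hee] at h'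
  have comp : ∀ {i n p : Fin k},
      e.r (inl i) (inr n) → e.r (inl n) (inr p) → e.r (inl i) (inr p) := by
    intro i n p h1 h2
    apply hprod (inl i) (inr p)
    have b1 : B (inl i) (inr (inl n)) := big_row12 h1
    have b2 : B (inr (inl n)) (inr (inr p)) := big_row23 h2
    exact show B (row13 k (inl i)) (row13 k (inr p)) from B.trans' b1 b2
  set ρ : Setoid (Fin k) := botPart e ⊔ topPart e with hρ
  have midrel : ∀ {n n' : Fin k}, ρ n n' → B (inr (inl n)) (inr (inl n')) := by
    intro n n' h
    have hle : ρ ≤ Setoid.comap (fun n : Fin k => (inr (inl n) : Fin k ⊕ (Fin k ⊕ Fin k))) B := by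
      apply sup_le
      · intro p q hpq
        have hpq' : e.r (inr p) (inr q) := hpq
        exact (big_row12 hpq' :)
      · intro p q hpq
        have hpq' : e.r (inl p) (inl q) := hpq
        exact (big_row23 hpq' :)
    exact hle h
  have F1 : ∀ {i n n' i' : Fin k}, e.r (inl i) (inr n) → ρ n n' → e.r (inl i') (inr n') →
      e.r (inl i) (inl i') := by
    intro i n n' i' h1 h2 h3
    apply hprod (inl i) (inl i')
    have b1 : B (inl i) (inr (inl n)) := big_row12 h1
    have b3 : B (inl i') (inr (inl n')) := big_row12 h3
    exact show B (row13 k (inl i)) (row13 k (inl i')) from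
      B.trans' b1 (B.trans' (midrel h2) (B.symm' b3))
  have F2 : ∀ {n j n' j' : Fin k}, e.r (inl n) (inr j) → ρ n n' → e.r (inl n') (inr j') →
      e.r (inr j) (inr j') := by
    intro n j n' j' h1 h2 h3
    apply hprod (inr j) (inr j')
    have b1 : B (inr (inl n)) (inr (inr j)) := big_row23 h1
    have b3 : B (inr (inl n')) (inr (inr j')) := big_row23 h3
    exact show B (row13 k (inr j)) (row13 k (inr j')) from
      B.trans' (B.symm' b1) (B.trans' (midrel h2) b3)
  choose μ hμ using fun i : Fin k => exists_inr_rel he (e.refl' (inl i))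
  have hμ' : ∀ i, e.r (inl i) (inr (μ i)) := fun i => e.symm' (hμ i)
  choose ν hν using fun n : Fin k => exists_inl_rel he (e.refl' (inr n))
  have botle : botPart e ≤ ρ := le_sup_left
  have tople : topPart e ≤ ρ := le_sup_right
  have hΨw : ∀ i i', ρ i i' → ρ (μ i) (μ i') := by
    intro i i' h
    have : e.r (inr (μ i)) (inr (μ i')) := F2 (hμ' i) h (hμ' i')
    exact botle this
  have hΦw : ∀ n n', ρ n n' → ρ (ν n) (ν n') := by
    intro n n' h
    have : e.r (inl (ν n)) (inl (ν n')) := F1 (hν n) h (hν n')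
    exact tople this
  set Ψ : Quotient ρ → Quotient ρ := Quotient.map' μ hΨw with hΨdef
  set Φ : Quotient ρ → Quotient ρ := Quotient.map' ν hΦw with hΦdef
  have hΨΦ : ∀ q, Ψ (Φ q) = q := by
    intro q; induction q using Quotient.inductionOn' with
    | h n =>
      have hr : e.r (inr (μ (ν n))) (inr n) := F2 (hμ' (ν n)) (ρ.refl' (ν n)) (hν n)
      exact Quotient.sound' (botle hr)
  have hΨΨ : ∀ q, Ψ (Ψ q) = Ψ q := by
    intro q; induction q using Quotient.inductionOn' with
    | h i =>
      have hc : e.r (inl i) (inr (μ (μ i))) := comp (hμ' i) (hμ' (μ i))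
      have hr : e.r (inr (μ (μ i))) (inr (μ i)) :=
        e.symm' (F2 (hμ' i) (ρ.refl' i) hc)
      exact Quotient.sound' (botle hr)
  have hΨid : ∀ q, Ψ q = q := by
    intro q
    calc Ψ q = Ψ (Ψ (Φ q)) := by rw [hΨΦ]
    _ = Ψ (Φ q) := hΨΨ _
    _ = q := hΨΦ q
  have ρμ : ∀ i, ρ (μ i) i := fun i => Quotient.exact' (hΨid (Quotient.mk'' i))
  have cross : ∀ i, e.r (inl i) (inr i) := by
    intro i
    have h1 : e.r (inl i) (inl (ν i)) := F1 (hμ' i) (ρμ i) (hν i)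
    exact e.trans' h1 (hν i)
  apply Setoid.ext; intro u v
  have eb : ∀ w : Fin k ⊕ Fin k, e.r w (inr (Sum.elim id id w)) := by
    intro w; cases w with
    | inl a => exact cross a
    | inr b => exact e.refl' _
  constructor
  · intro h
    exact show e.r (inr (Sum.elim id id u)) (inr (Sum.elim id id v)) from
      e.trans' (e.symm' (eb u)) (e.trans' h (eb v))
  · intro h
    have h' : e.r (inr (Sum.elim id id u)) (inr (Sum.elim id id v)) := h
    exact e.trans' (eb u) (e.trans' h' (e.symm' (eb v)))

end UBPaux
/-- `U_k d₁ = U_k d₂ ↔ bot(d₁) = bot(d₂)`; consequently the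
`L`-classes of `U_k` are in bijection with the set partitions of `[k]`, and each
`L`-class contains exactly one idempotent. -/
theorem ubp_L_classes (k : ℕ) :
    (∀ d₁ d₂ : Setoid (Fin k ⊕ Fin k), IsUniform k d₁ → IsUniform k d₂ →
      (leftIdeal k d₁ = leftIdeal k d₂ ↔ botPart d₁ = botPart d₂)) ∧
    Nonempty (Quotient (Setoid.ker
        (fun d : {d : Setoid (Fin k ⊕ Fin k) // IsUniform k d} => leftIdeal k d.1)) ≃
      Setoid (Fin k)) ∧
    (∀ d : Setoid (Fin k ⊕ Fin k), IsUniform k d →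
      ∃! e : Setoid (Fin k ⊕ Fin k), IsUniform k e ∧ ubpMul e e = e ∧
        leftIdeal k e = leftIdeal k d) := by
  classical
  refine ⟨fun d₁ d₂ h₁ h₂ => UBPaux.part1 h₁ h₂, ?_, ?_⟩
  · set S := Setoid.ker
      (fun d : {d : Setoid (Fin k ⊕ Fin k) // IsUniform k d} => leftIdeal k d.1) with hS
    have hwd : ∀ a b : {d : Setoid (Fin k ⊕ Fin k) // IsUniform k d},
        S a b → botPart a.1 = botPart b.1 := by
      intro a b hab
      exact (UBPaux.part1 a.2 b.2).mp hab
    refine ⟨Equiv.ofBijective (fun q => Quotient.liftOn' q (fun d => botPart d.1) hwd) ⟨?_, ?_⟩⟩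
    · intro q q'
      induction q using Quotient.inductionOn' with
      | h a =>
        induction q' using Quotient.inductionOn' with
        | h b =>
          intro h
          have h' : botPart a.1 = botPart b.1 := h
          exact Quotient.sound' ((UBPaux.part1 a.2 b.2).mpr h' :)
    · intro π
      exact ⟨Quotient.mk'' ⟨ePart π, UBPaux.ePart_uniform π⟩, UBPaux.botPart_ePart π⟩
  · intro d hd
    refine ⟨ePart (botPart d), ⟨UBPaux.ePart_uniform _, UBPaux.ePart_idem _, ?_⟩, ?_⟩
    · exact (UBPaux.part1 (UBPaux.ePart_uniform _) hd).mpr (UBPaux.botPart_ePart _)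
    · rintro e ⟨he, hee, hLe⟩
      have h1 : botPart e = botPart d := (UBPaux.part1 he hd).mp hLe
      calc e = ePart (botPart e) := UBPaux.idem_eq_ePart he hee
      _ = ePart (botPart d) := by rw [h1]
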